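/- Over a field F of characteristic ≠ 2, the four multilinear invariants q(z₁,z₂)q(z₃,z₄), q(z₁,z₃)q(z₂,z₄), q(z₁,z₄)q(z₂,z₃), and Q(z₁,z₂,z₃,z₄), regarded as multilinear maps O⁴ → F, are linearly independent. (In particular, the substitution z₁ ↦ e₁, z₂ ↦ v₁, z₃ ↦ v₂, z₄ ↦ v₃ kills the first three and sends Q to −1/2.) -/

import Mathlib

open Matrix

/-- The Zorn vector-matrix algebra: elements `(α, u; v, β)` with `α β : F`, `u v : F³`. -/
def Zorn (F : Type*) : Type _ := F × F × (Fin 3 → F) × (Fin 3 → F)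

namespace Zorn

variable {F : Type*} [Field F]

/-- Build a Zorn matrix from its four components. -/
def mk (a b : F) (u v : Fin 3 → F) : Zorn F := (a, b, u, v)

/-- The upper-left scalar entry `α`. -/
def al (x : Zorn F) : F := x.1
/-- The lower-right scalar entry `β`. -/
def be (x : Zorn F) : F := x.2.1
/-- The upper-right vector entry `u`. -/
def up (x : Zorn F) : Fin 3 → F := x.2.2.1
/-- The lower-left vector entry `v`. -/
def lo (x : Zorn F) : Fin 3 → F := x.2.2.2

instance : AddCommGroup (Zorn F) :=
  inferInstanceAs (AddCommGroup (F × F × (Fin 3 → F) × (Fin 3 → F)))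

instance : Module F (Zorn F) :=
  inferInstanceAs (Module F (F × F × (Fin 3 → F) × (Fin 3 → F)))

/-- Zorn vector-matrix multiplication. -/
instance : Mul (Zorn F) :=
  ⟨fun x y => mk (x.al * y.al + x.up ⬝ᵥ y.lo)
      (x.be * y.be + x.lo ⬝ᵥ y.up)
      (x.al • y.up + y.be • x.up - crossProduct x.lo y.lo)
      (y.al • x.lo + x.be • y.lo + crossProduct x.up y.up)⟩

instance : One (Zorn F) := ⟨mk 1 1 0 0⟩

/-- The standard conjugation (involution) of the Zorn algebra. -/
def conj (x : Zorn F) : Zorn F := mk x.be x.al (-x.up) (-x.lo)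

/-- The trace `t(a) = α + β` (the scalar such that `a + conj a = t a • 1`). -/
def t (x : Zorn F) : F := x.al + x.be

/-- The norm `n(a) = αβ - u·v` (the scalar such that `a * conj a = n a • 1`). -/
def n (x : Zorn F) : F := x.al * x.be - x.up ⬝ᵥ x.lo

/-- The idempotent `e₁`. -/
def e₁ : Zorn F := mk 1 0 0 0
/-- The idempotent `e₂`. -/
def e₂ : Zorn F := mk 0 1 0 0
/-- The basis element `u_i`. -/
def U (i : Fin 3) : Zorn F := mk 0 0 (Pi.single i 1) 0
/-- The basis element `v_i`. -/
def V (i : Fin 3) : Zorn F := mk 0 0 0 (Pi.single i 1)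

/-- An (algebra) automorphism of the Zorn algebra: a bijective `F`-linear,
multiplicative, unital self-map. -/
def IsAut (g : Zorn F → Zorn F) : Prop :=
  Function.Bijective g ∧ (∀ x y : Zorn F, g (x + y) = g x + g y) ∧
    (∀ (c : F) (x : Zorn F), g (c • x) = c • g x) ∧
    (∀ x y : Zorn F, g (x * y) = g x * g y) ∧ g 1 = 1

end Zorn

open Zorn

/-- `M(z₁,z₂) = ½(z₁z₂ − z₂z₁) + t(z₁)z₂ − t(z₂)z₁`. -/
def M {F : Type*} [Field F] (z₁ z₂ : Zorn F) : Zorn F :=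
  (2 : F)⁻¹ • (z₁ * z₂ - z₂ * z₁) + Zorn.t z₁ • z₂ - Zorn.t z₂ • z₁

/-- `F(z₁,z₂,z₃,z₄) = t(M(z₁,z₂)·M(z₃,z₄))`. -/
def Fq {F : Type*} [Field F] (z₁ z₂ z₃ z₄ : Zorn F) : F :=
  Zorn.t (M z₁ z₂ * M z₃ z₄)

/-- `Q`, the complete skew symmetrization of `F(z₁,z₂,z₃,z₄)`. -/
def Q {F : Type*} [Field F] (z₁ z₂ z₃ z₄ : Zorn F) : F :=
  (6 : F)⁻¹ * (Fq z₁ z₂ z₃ z₄ - Fq z₃ z₂ z₁ z₄ - Fq z₄ z₂ z₃ z₁ - Fq z₁ z₄ z₃ z₂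
    - Fq z₁ z₃ z₂ z₄ - Fq z₃ z₄ z₂ z₁)

/-- The scalar bilinear form of the norm: `q(a,b) = αβ' + α'β − u·v' − u'·v`,
i.e. the scalar such that `a·conj(b) + b·conj(a) = q(a,b)·1`. -/
def qf {F : Type*} [Field F] (a b : Zorn F) : F :=
  a.al * b.be + b.al * a.be - a.up ⬝ᵥ b.lo - b.up ⬝ᵥ a.lo

section ZornAux
set_option linter.unusedSectionVars false
variable {F : Type*} [Field F]



lemma mul_mk (a b a' b' : F) (u v u' v' : Fin 3 → F) :
    (mk a b u v * mk a' b' u' v' : Zorn F)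
      = mk (a * a' + u ⬝ᵥ v') (b * b' + v ⬝ᵥ u')
        (a • u' + b' • u - crossProduct v v') (a' • v + b • v' + crossProduct u u') := rfl

lemma smul_mk (c a b : F) (u v : Fin 3 → F) :
    (c • mk a b u v : Zorn F) = mk (c * a) (c * b) (c • u) (c • v) := rfl

lemma add_mk (a b a' b' : F) (u v u' v' : Fin 3 → F) :
    (mk a b u v + mk a' b' u' v' : Zorn F) = mk (a + a') (b + b') (u + u') (v + v') := rfl

lemma sub_mk (a b a' b' : F) (u v u' v' : Fin 3 → F) :
    (mk a b u v - mk a' b' u' v' : Zorn F) = mk (a - a') (b - b') (u - u') (v - v') := rfl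

lemma t_mk (a b : F) (u v : Fin 3 → F) : Zorn.t (mk a b u v) = a + b := rfl


lemma al_mk (a b : F) (u v : Fin 3 → F) : (mk a b u v : Zorn F).al = a := rfl
lemma be_mk (a b : F) (u v : Fin 3 → F) : (mk a b u v : Zorn F).be = b := rfl
lemma up_mk (a b : F) (u v : Fin 3 → F) : (mk a b u v : Zorn F).up = u := rfl
lemma lo_mk (a b : F) (u v : Fin 3 → F) : (mk a b u v : Zorn F).lo = v := rfl

lemma U0 : (U 0 : Zorn F) = mk 0 0 ![1,0,0] 0 := by
  unfold U; congr 3; funext j; fin_cases j <;> simp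
lemma V0 : (V 0 : Zorn F) = mk 0 0 0 ![1,0,0] := by
  unfold V; congr 4; funext j; fin_cases j <;> simp
lemma V1 : (V 1 : Zorn F) = mk 0 0 0 ![0,1,0] := by
  unfold V; congr 4; funext j; fin_cases j <;> simp
lemma V2 : (V 2 : Zorn F) = mk 0 0 0 ![0,0,1] := by
  unfold V; congr 4; funext j; fin_cases j <;> simp


lemma nz_help (h2 : (2:F) ≠ 0) (h3 : (3:F) ≠ 0) :
    (64:F) ≠ 0 ∧ (128:F) ≠ 0 ∧ (24:F) ≠ 0 ∧ (48:F) ≠ 0 ∧ (6:F) ≠ 0 := by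
  refine ⟨?_, ?_, ?_, ?_, ?_⟩
  · rw [show (64:F) = 2^6 by norm_num]; exact pow_ne_zero _ h2
  · rw [show (128:F) = 2^7 by norm_num]; exact pow_ne_zero _ h2
  · rw [show (24:F) = 2^3*3 by norm_num]; exact mul_ne_zero (pow_ne_zero _ h2) h3
  · rw [show (48:F) = 2^4*3 by norm_num]; exact mul_ne_zero (pow_ne_zero _ h2) h3
  · rw [show (6:F) = 2*3 by norm_num]; exact mul_ne_zero h2 h3

lemma Qd (h2 : (2:F) ≠ 0) (h3 : (3:F) ≠ 0) : Q (e₁ : Zorn F) (V 0) (V 1) (V 2) = -(2⁻¹) := by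
  obtain ⟨n64, n128, n24, n48, n6⟩ := nz_help h2 h3
  simp only [Q, Fq, M, e₁, U0, V0, V1, V2, t_mk, mul_mk, smul_mk, add_mk, sub_mk, cross_apply,
    dotProduct, Fin.sum_univ_three]
  simp
  field_simp
  ring

lemma Qa (h2 : (2:F) ≠ 0) (h3 : (3:F) ≠ 0) : Q (e₁ : Zorn F) e₂ (U 0) (V 0) = -1 := by
  obtain ⟨n64, n128, n24, n48, n6⟩ := nz_help h2 h3
  simp only [Q, Fq, M, e₁, e₂, U0, V0, V1, V2, t_mk, mul_mk, smul_mk, add_mk, sub_mk, cross_apply,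
    dotProduct, Fin.sum_univ_three]
  simp
  field_simp
  ring

lemma Qb (h2 : (2:F) ≠ 0) (h3 : (3:F) ≠ 0) : Q (e₁ : Zorn F) (U 0) e₂ (V 0) = 1 := by
  obtain ⟨n64, n128, n24, n48, n6⟩ := nz_help h2 h3
  simp only [Q, Fq, M, e₁, e₂, U0, V0, V1, V2, t_mk, mul_mk, smul_mk, add_mk, sub_mk, cross_apply,
    dotProduct, Fin.sum_univ_three]
  simp
  field_simp
  ring

lemma Qc (h2 : (2:F) ≠ 0) (h3 : (3:F) ≠ 0) : Q (e₁ : Zorn F) (U 0) (V 0) e₂ = -1 := by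
  obtain ⟨n64, n128, n24, n48, n6⟩ := nz_help h2 h3
  simp only [Q, Fq, M, e₁, e₂, U0, V0, V1, V2, t_mk, mul_mk, smul_mk, add_mk, sub_mk, cross_apply,
    dotProduct, Fin.sum_univ_three]
  simp
  field_simp
  ring


end ZornAux

/-- The four multilinear invariants `q(12)q(34)`, `q(13)q(24)`, `q(14)q(23)`
and `Q(1234)` are linearly independent as multilinear maps `O⁴ → F`. -/
theorem zorn_invariants_linear_independent {F : Type*} [Field F]
    (h2 : (2 : F) ≠ 0) (h3 : (3 : F) ≠ 0) (a b c d : F)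
    (h : ∀ z₁ z₂ z₃ z₄ : Zorn F,
      a * (qf z₁ z₂ * qf z₃ z₄) + b * (qf z₁ z₃ * qf z₂ z₄)
        + c * (qf z₁ z₄ * qf z₂ z₃) + d * Q z₁ z₂ z₃ z₄ = 0) :
    a = 0 ∧ b = 0 ∧ c = 0 ∧ d = 0 := by
  have hd := h e₁ (V 0) (V 1) (V 2)
  have ha := h e₁ e₂ (U 0) (V 0)
  have hb := h e₁ (U 0) e₂ (V 0)
  have hc := h e₁ (U 0) (V 0) e₂
  rw [Qd h2 h3] at hd
  rw [Qa h2 h3] at ha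
  rw [Qb h2 h3] at hb
  rw [Qc h2 h3] at hc
  simp only [qf, e₁, e₂, U0, V0, V1, V2, al_mk, be_mk, up_mk, lo_mk,
    dotProduct, Fin.sum_univ_three, Matrix.cons_val_zero, Matrix.cons_val_one,
    Matrix.cons_val_two, Matrix.head_cons, Matrix.tail_cons] at hd ha hb hc
  norm_num at hd ha hb hc
  have d0 : d = 0 := by
    rcases hd with h' | h'
    · exact h'
    · exact absurd h' h2
  subst d0
  norm_num at ha hb hc
  exact ⟨ha, hb, hc, rfl⟩
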